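/- arXiv:1301.6345 — 4 statements merged into one kernel-verified Lean document; each statement's English description precedes it below -/
import Mathlib

section
/- Let 0 < P ≤ Λ and σ² ≥ 0. For every blocklength n ≥ 1 and every stochastic code of blocklength n with M ≥ 2 messages and power constraint P, there exists a jamming vector s ∈ ℝⁿ with ‖s‖² ≤ nΛ such that max_{1 ≤ i ≤ M} e(s,i) ≥ 1/4. -/
open MeasureTheory ProbabilityTheory Real Filter
open scoped InnerProductSpace ENNReal NNReal

/-- Law of a vector of `n` i.i.d. centered Gaussian coordinates of variance `v`,
as a measure on `EuclideanSpace ℝ (Fin n)`. -/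
noncomputable def gaussianVec (n : ℕ) (v : ℝ) : Measure (EuclideanSpace ℝ (Fin n)) :=
  (Measure.pi fun _ : Fin n => gaussianReal 0 v.toNNReal).map
    (MeasurableEquiv.toLp 2 (Fin n → ℝ))

/-- The uniform (rotation-invariant) probability measure on the sphere of radius `r`
centered at the origin of `ℝⁿ`. -/
noncomputable def sphereUniform (n : ℕ) (r : ℝ) : Measure (EuclideanSpace ℝ (Fin n)) :=
  (((volume : Measure (EuclideanSpace ℝ (Fin n))).toSphere Set.univ)⁻¹ •
      (volume : Measure (EuclideanSpace ℝ (Fin n))).toSphere).map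
    (fun x : Metric.sphere (0 : EuclideanSpace ℝ (Fin n)) 1 =>
      r • (x : EuclideanSpace ℝ (Fin n)))

/-- The uniform probability measure on `Fin N`. -/
noncomputable def uniformFin (N : ℕ) : Measure (Fin N) :=
  ((N : ℝ≥0∞))⁻¹ • Measure.count

lemma auxSetEq {α : Type*} [MeasurableSpace α] {f : α → ℕ} (hf : Measurable f) (k : ℕ) :
    MeasurableSet {x | f x = k} := by
  have h : {x | f x = k} = f ⁻¹' {k} := rfl
  rw [h]; exact hf (measurableSet_singleton k)

lemma auxSetNe {α : Type*} [MeasurableSpace α] {f : α → ℕ} (hf : Measurable f) (k : ℕ) :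
    MeasurableSet {x | f x ≠ k} :=
  (auxSetEq hf k).compl

lemma auxMeas {α β : Type*} [MeasurableSpace α] [MeasurableSpace β]
    (ν : Measure β) [SFinite ν] {φ : β → ℕ} (hφ : Measurable φ)
    [Add β] [MeasurableAdd₂ β]
    {g : α → β} (hg : Measurable g) (k : ℕ) :
    Measurable fun q : α => ν {v | φ (g q + v) = k} := by
  have hs : MeasurableSet {r : α × β | φ (g r.1 + r.2) = k} :=
    auxSetEq (hφ.comp ((hg.comp measurable_fst).add measurable_snd)) k
  exact measurable_measure_prodMk_left hs

/-- Converse (symmetrizability) for `P ≤ Λ`: every stochastic code of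
blocklength `n ≥ 1` with `M ≥ 2` messages and power constraint `P` admits a jamming vector
`s` with `‖s‖² ≤ nΛ` for which the maximum (over messages) error probability is at
least `1/4`. The decoder `φ` outputs values in `{0,…,M}`, with `0` denoting an error and
message `i : Fin M` corresponding to output `i+1`. -/
theorem stmt1 (P Λ σ2 : ℝ) (hP : 0 < P) (hPΛ : P ≤ Λ) (hσ : 0 ≤ σ2)
    (n M : ℕ) (hn : 1 ≤ n) (hM : 2 ≤ M)
    (μ : Fin M → Measure (EuclideanSpace ℝ (Fin n)))
    (φ : EuclideanSpace ℝ (Fin n) → ℕ)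
    (hprob : ∀ i, IsProbabilityMeasure (μ i))
    (hsupp : ∀ i, μ i {x | ‖x‖ ^ 2 ≤ n * P} = 1)
    (hφ : Measurable φ) (hφM : ∀ y, φ y ≤ M) :
    ∃ s : EuclideanSpace ℝ (Fin n), ‖s‖ ^ 2 ≤ n * Λ ∧
      ∃ i : Fin M,
        1 / 4 ≤ (((μ i).prod (gaussianVec n σ2))
            {p | φ (p.1 + s + p.2) ≠ i.val + 1}).toReal := by
  classical
  haveI hνp : IsProbabilityMeasure (gaussianVec n σ2) := by
    unfold gaussianVec
    exact Measure.isProbabilityMeasure_map (MeasurableEquiv.measurable _).aemeasurable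
  set ν := gaussianVec n σ2 with hνdef
  haveI := fun a => hprob a
  set i : Fin M := ⟨0, by omega⟩ with hidef
  set j : Fin M := ⟨1, by omega⟩ with hjdef
  set c : Fin M → EuclideanSpace ℝ (Fin n) → ℝ≥0∞ := fun a s =>
    ((μ a).prod ν) {p | φ (p.1 + s + p.2) = a.val + 1} with hcdef
  set e : Fin M → EuclideanSpace ℝ (Fin n) → ℝ≥0∞ := fun a s =>
    ((μ a).prod ν) {p | φ (p.1 + s + p.2) ≠ a.val + 1} with hedef
  have hmeasP : ∀ (a : Fin M) (s : EuclideanSpace ℝ (Fin n)),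
      MeasurableSet {p : EuclideanSpace ℝ (Fin n) × EuclideanSpace ℝ (Fin n) |
        φ (p.1 + s + p.2) = a.val + 1} := fun a s =>
    auxSetEq (hφ.comp ((measurable_fst.add_const s).add measurable_snd)) _
  have hce : ∀ (a : Fin M) (s : EuclideanSpace ℝ (Fin n)), c a s + e a s = 1 := by
    intro a s
    have := measure_add_measure_compl (μ := (μ a).prod ν) (hmeasP a s)
    rw [measure_univ] at this
    exact this
  have hcmeas : ∀ a : Fin M, Measurable (c a) := by
    intro a
    have hQ : MeasurableSet {q : EuclideanSpace ℝ (Fin n) ×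
        (EuclideanSpace ℝ (Fin n) × EuclideanSpace ℝ (Fin n)) |
        φ (q.2.1 + q.1 + q.2.2) = a.val + 1} :=
      auxSetEq (hφ.comp (((measurable_snd.fst).add measurable_fst).add measurable_snd.snd)) _
    exact measurable_measure_prodMk_left hQ
  have hemeas : ∀ a : Fin M, Measurable (e a) := by
    intro a
    have hQ : MeasurableSet {q : EuclideanSpace ℝ (Fin n) ×
        (EuclideanSpace ℝ (Fin n) × EuclideanSpace ℝ (Fin n)) |
        φ (q.2.1 + q.1 + q.2.2) ≠ a.val + 1} :=
      auxSetNe (hφ.comp (((measurable_snd.fst).add measurable_fst).add measurable_snd.snd)) _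
    exact measurable_measure_prodMk_left hQ
  have hc_eq : ∀ (a : Fin M) (s : EuclideanSpace ℝ (Fin n)),
      c a s = ∫⁻ x, ν {v | φ (x + s + v) = a.val + 1} ∂(μ a) :=
    fun a s => Measure.prod_apply (hmeasP a s)
  -- inner measurable maps on pairs
  have hinner : ∀ (k : ℕ), Measurable fun q :
      EuclideanSpace ℝ (Fin n) × EuclideanSpace ℝ (Fin n) =>
      ν {v | φ (q.1 + q.2 + v) = k} :=
    fun k => auxMeas ν hφ (measurable_fst.add measurable_snd) k
  have hinner' : ∀ (k : ℕ), Measurable fun q :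
      EuclideanSpace ℝ (Fin n) × EuclideanSpace ℝ (Fin n) =>
      ν {v | φ (q.2 + q.1 + v) = k} :=
    fun k => auxMeas ν hφ (measurable_snd.add measurable_fst) k
  -- key symmetrization bound
  have hkey : (∫⁻ s, c i s ∂(μ j)) + (∫⁻ s, c j s ∂(μ i)) ≤ 1 := by
    have h1 : (∫⁻ s, c i s ∂(μ j))
        = ∫⁻ x, ∫⁻ s, ν {v | φ (x + s + v) = i.val + 1} ∂(μ j) ∂(μ i) := by
      have := lintegral_lintegral_swap (μ := μ j) (ν := μ i)
        (f := fun s x => ν {v | φ (x + s + v) = i.val + 1})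
        ((hinner' (i.val + 1)).aemeasurable)
      rw [show (fun s => c i s) = fun s => ∫⁻ x, ν {v | φ (x + s + v) = i.val + 1} ∂(μ i)
        from funext fun s => hc_eq i s]
      exact this
    have h2 : (∫⁻ s, c j s ∂(μ i))
        = ∫⁻ x, ∫⁻ s, ν {v | φ (x + s + v) = j.val + 1} ∂(μ j) ∂(μ i) := by
      calc (∫⁻ s, c j s ∂(μ i))
          = ∫⁻ s, ∫⁻ x, ν {v | φ (x + s + v) = j.val + 1} ∂(μ j) ∂(μ i) :=
            lintegral_congr fun s => hc_eq j s
        _ = ∫⁻ x, ∫⁻ s, ν {v | φ (x + s + v) = j.val + 1} ∂(μ j) ∂(μ i) := by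
            apply lintegral_congr; intro x
            apply lintegral_congr; intro s
            congr 1
            ext v
            simp [add_comm x s]
    rw [h1, h2, ← lintegral_add_left (hinner (i.val + 1)).lintegral_prod_right']
    have hstep : ∀ x : EuclideanSpace ℝ (Fin n),
        (∫⁻ s, ν {v | φ (x + s + v) = i.val + 1} ∂(μ j)) +
        (∫⁻ s, ν {v | φ (x + s + v) = j.val + 1} ∂(μ j)) ≤ 1 := by
      intro x
      have hmx : ∀ k : ℕ, Measurable fun s : EuclideanSpace ℝ (Fin n) =>
          ν {v | φ (x + s + v) = k} :=
        fun k => auxMeas ν hφ (measurable_const.add measurable_id) k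
      rw [← lintegral_add_left (hmx (i.val + 1))]
      calc (∫⁻ s, ν {v | φ (x + s + v) = i.val + 1}
              + ν {v | φ (x + s + v) = j.val + 1} ∂(μ j))
          ≤ ∫⁻ _, 1 ∂(μ j) := by
            apply lintegral_mono
            intro s
            have hdisj : Disjoint {v : EuclideanSpace ℝ (Fin n) | φ (x + s + v) = i.val + 1}
                {v | φ (x + s + v) = j.val + 1} := by
              rw [Set.disjoint_left]
              intro v hv1 hv2
              simp only [Set.mem_setOf_eq] at hv1 hv2
              have : i.val = j.val := by omega
              simp [hidef, hjdef] at this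
            have hm2 : MeasurableSet {v : EuclideanSpace ℝ (Fin n) |
                φ (x + s + v) = j.val + 1} :=
              auxSetEq (hφ.comp (measurable_const.add measurable_id)) _
            beta_reduce
            rw [← measure_union hdisj hm2]
            exact prob_le_one
        _ = 1 := by simp
    calc _ ≤ ∫⁻ _, (1 : ℝ≥0∞) ∂(μ i) := lintegral_mono hstep
      _ = 1 := by simp
  -- error + correct integrals sum to one
  have hsum : ∀ a b : Fin M, (∫⁻ s, e a s ∂(μ b)) + (∫⁻ s, c a s ∂(μ b)) = 1 := by
    intro a b
    rw [← lintegral_add_left (hemeas a)]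
    have : ∀ s, e a s + c a s = 1 := fun s => by rw [add_comm]; exact hce a s
    calc (∫⁻ s, e a s + c a s ∂(μ b)) = ∫⁻ _, (1 : ℝ≥0∞) ∂(μ b) :=
          lintegral_congr this
      _ = 1 := by simp
  -- so the error integrals sum to at least one
  have herr : (1 : ℝ≥0∞) ≤ (∫⁻ s, e i s ∂(μ j)) + (∫⁻ s, e j s ∂(μ i)) := by
    by_contra hlt
    push_neg at hlt
    have h2 : ((∫⁻ s, e i s ∂(μ j)) + (∫⁻ s, c i s ∂(μ j))) +
        ((∫⁻ s, e j s ∂(μ i)) + (∫⁻ s, c j s ∂(μ i))) = 2 := by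
      rw [hsum i j, hsum j i]; norm_num
    have h3 : ((∫⁻ s, e i s ∂(μ j)) + (∫⁻ s, c i s ∂(μ j))) +
        ((∫⁻ s, e j s ∂(μ i)) + (∫⁻ s, c j s ∂(μ i))) =
        ((∫⁻ s, e i s ∂(μ j)) + (∫⁻ s, e j s ∂(μ i))) +
        ((∫⁻ s, c i s ∂(μ j)) + (∫⁻ s, c j s ∂(μ i))) := by ring
    have h4 : ((∫⁻ s, e i s ∂(μ j)) + (∫⁻ s, e j s ∂(μ i))) +
        ((∫⁻ s, c i s ∂(μ j)) + (∫⁻ s, c j s ∂(μ i))) < 1 + 1 :=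
      ENNReal.add_lt_add_of_lt_of_le (ne_top_of_le_ne_top ENNReal.one_ne_top hkey) hlt hkey
    rw [← h3, h2] at h4
    norm_num at h4
  -- main reduction: from a half-mass error integral, find a jamming vector
  have main : ∀ a b : Fin M, (1 / 2 : ℝ≥0∞) ≤ (∫⁻ s, e a s ∂(μ b)) →
      ∃ s : EuclideanSpace ℝ (Fin n), ‖s‖ ^ 2 ≤ n * Λ ∧
        ∃ i : Fin M, 1 / 4 ≤ (((μ i).prod (gaussianVec n σ2))
          {p | φ (p.1 + s + p.2) ≠ i.val + 1}).toReal := by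
    intro a b hab
    have hSm : MeasurableSet {x : EuclideanSpace ℝ (Fin n) | ‖x‖ ^ 2 ≤ n * P} :=
      measurableSet_le (by fun_prop) measurable_const
    have hScompl : μ b {x : EuclideanSpace ℝ (Fin n) | ‖x‖ ^ 2 ≤ n * P}ᶜ = 0 := by
      rw [measure_compl hSm (measure_ne_top _ _), hsupp b, measure_univ, tsub_self]
    have hex : ∃ s : EuclideanSpace ℝ (Fin n), ‖s‖ ^ 2 ≤ n * P ∧
        (1 / 4 : ℝ≥0∞) ≤ e a s := by
      by_contra hno
      push_neg at hno
      have hae : ∀ᵐ s ∂(μ b), e a s ≤ 1 / 4 := by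
        rw [ae_iff]
        refine measure_mono_null ?_ hScompl
        intro s hs
        simp only [Set.mem_setOf_eq, not_le] at hs ⊢
        intro hsP
        exact absurd (hno s hsP).le (not_le.mpr hs)
      have : (∫⁻ s, e a s ∂(μ b)) ≤ 1 / 4 := by
        calc (∫⁻ s, e a s ∂(μ b)) ≤ ∫⁻ _, (1 / 4 : ℝ≥0∞) ∂(μ b) := lintegral_mono_ae hae
          _ = 1 / 4 := by simp
      have hcon := le_trans hab this
      norm_num at hcon
    obtain ⟨s, hsP, hse⟩ := hex
    refine ⟨s, ?_, a, ?_⟩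
    · calc ‖s‖ ^ 2 ≤ n * P := hsP
        _ ≤ n * Λ := by
          have : (0:ℝ) ≤ n := Nat.cast_nonneg n
          nlinarith
    · have hfin : e a s ≠ ⊤ := measure_ne_top _ _
      have := ENNReal.toReal_mono hfin hse
      simpa using this
  rcases (le_or_gt (1/2 : ℝ≥0∞) (∫⁻ s, e i s ∂(μ j))) with h | h
  · exact main i j h
  · apply main j i
    by_contra hno
    push_neg at hno
    have := ENNReal.add_lt_add h hno
    rw [ENNReal.add_halves] at this
    exact absurd herr (not_le.mpr this)
end

section
/- Let X₁,…,X_L be random variables on a probability space, and for each i ∈ {1,…,L} let f_i be a measurable function of i real arguments with 0 ≤ f_i ≤ 1. If, for some a > 0 and every i, the conditional expectation satisfies E[ f_i(X₁,…,X_i) | X₁,…,X_{i−1} ] ≤ a almost surely, then Pr[ (1/L)·Σ_{i=1}^{L} f_i(X₁,…,X_i) > τ ] ≤ exp( −L(τ·ln 2 − a) ) for every τ > 0. -/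
open MeasureTheory ProbabilityTheory Real Filter
open scoped InnerProductSpace ENNReal NNReal

lemma exp_log_two_mul_le {t : ℝ} (h0 : 0 ≤ t) (h1 : t ≤ 1) :
    Real.exp (Real.log 2 * t) ≤ 1 + t := by
  have := convexOn_exp.2 (Set.mem_univ (0:ℝ)) (Set.mem_univ (Real.log 2))
    (by linarith : (0:ℝ) ≤ 1 - t) h0 (by ring)
  simp only [smul_eq_mul, mul_zero, zero_add, Real.exp_zero,
    Real.exp_log (by norm_num : (0:ℝ) < 2)] at this
  calc Real.exp (Real.log 2 * t) = Real.exp (t * Real.log 2) := by ring_nf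
    _ ≤ (1 - t) * 1 + t * 2 := this
    _ = 1 + t := by ring

/-- Conditional-expectation bound for `exp(log 2 · G)` given a bound on `E[G|m]`. -/
lemma hce_aux {Ω : Type*} {m mΩ : MeasurableSpace Ω} (hm : m ≤ mΩ)
    (μ : Measure Ω) [IsProbabilityMeasure μ] {G : Ω → ℝ}
    (hG : Measurable G) (hG0 : ∀ ω, 0 ≤ G ω) (hG1 : ∀ ω, G ω ≤ 1)
    {a : ℝ} (hGa : ∀ᵐ ω ∂μ, (μ[G|m]) ω ≤ a) :
    μ[fun ω => Real.exp (Real.log 2 * G ω)|m] ≤ᵐ[μ] fun _ => 1 + a := by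
  have hG_int : Integrable G μ := by
    refine Integrable.mono' (integrable_const 1) hG.aestronglyMeasurable
      (Eventually.of_forall fun ω => ?_)
    rw [Real.norm_eq_abs, abs_of_nonneg (hG0 ω)]; exact hG1 ω
  have he_int : Integrable (fun ω => Real.exp (Real.log 2 * G ω)) μ := by
    refine Integrable.mono' (integrable_const 2)
      (Real.measurable_exp.comp (hG.const_mul _)).aestronglyMeasurable
      (Eventually.of_forall fun ω => ?_)
    rw [Real.norm_eq_abs, abs_of_pos (Real.exp_pos _)]
    calc Real.exp (Real.log 2 * G ω) ≤ 1 + G ω := exp_log_two_mul_le (hG0 ω) (hG1 ω)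
      _ ≤ 2 := by linarith [hG1 ω]
  have h1 : μ[fun ω => Real.exp (Real.log 2 * G ω)|m] ≤ᵐ[μ]
      μ[(fun _ => (1:ℝ)) + G|m] :=
    condExp_mono he_int ((integrable_const 1).add hG_int)
      (Eventually.of_forall fun ω => exp_log_two_mul_le (hG0 ω) (hG1 ω))
  have h2 : μ[(fun _ => (1:ℝ)) + G|m] =ᵐ[μ] (fun _ => (1:ℝ)) + μ[G|m] := by
    refine (condExp_add (integrable_const 1) hG_int m).trans ?_
    rw [condExp_const hm]
  filter_upwards [h1, h2, hGa] with ω hω1 hω2 hω3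
  calc (μ[fun ω => Real.exp (Real.log 2 * G ω)|m]) ω
      ≤ (μ[(fun _ => (1:ℝ)) + G|m]) ω := hω1
    _ = 1 + (μ[G|m]) ω := hω2
    _ ≤ 1 + a := by linarith

/-- One step of the martingale argument. -/
lemma step_aux {Ω : Type*} {m mΩ : MeasurableSpace Ω} (hm : m ≤ mΩ)
    (μ : Measure Ω) [IsProbabilityMeasure μ]
    {Pk e : Ω → ℝ} {C a : ℝ} (ha : 0 < a)
    (hPkm : StronglyMeasurable[m] Pk) (hPkmeas : Measurable Pk)
    (hPk0 : ∀ ω, 0 ≤ Pk ω) (hPkC : ∀ ω, Pk ω ≤ C)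
    (hPkint : Integrable Pk μ) (hPe_int : Integrable (fun ω => Pk ω * e ω) μ)
    (he_int : Integrable e μ) (he0 : ∀ ω, 0 ≤ e ω)
    (hce : μ[e|m] ≤ᵐ[μ] fun _ => 1 + a) :
    ∫ ω, Pk ω * e ω ∂μ ≤ (1 + a) * ∫ ω, Pk ω ∂μ := by
  haveI : SigmaFinite (μ.trim hm) := by infer_instance
  have hce0 : (0:Ω → ℝ) ≤ᵐ[μ] μ[e|m] := condExp_nonneg (Eventually.of_forall he0)
  have hpull : μ[fun ω => Pk ω * e ω|m] =ᵐ[μ] fun ω => Pk ω * (μ[e|m]) ω :=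
    condExp_mul_of_stronglyMeasurable_left hPkm hPe_int he_int
  have h_int_rhs : Integrable (fun ω => Pk ω * (μ[e|m]) ω) μ := by
    refine Integrable.mono' (integrable_const (|C| * (1 + a)))
      (hPkmeas.aestronglyMeasurable.mul
        (stronglyMeasurable_condExp.mono hm).aestronglyMeasurable) ?_
    filter_upwards [hce, hce0] with ω h1 h0
    rw [Real.norm_eq_abs, abs_of_nonneg (mul_nonneg (hPk0 ω) (h0 : (0:ℝ) ≤ _))]
    refine mul_le_mul ((hPkC ω).trans (le_abs_self C)) h1 h0 (abs_nonneg _)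
  calc ∫ ω, Pk ω * e ω ∂μ
      = ∫ ω, (μ[fun ω => Pk ω * e ω|m]) ω ∂μ := (integral_condExp hm).symm
    _ = ∫ ω, Pk ω * (μ[e|m]) ω ∂μ := integral_congr_ae hpull
    _ ≤ ∫ ω, (1 + a) * Pk ω ∂μ := by
        refine integral_mono_ae h_int_rhs (hPkint.const_mul _) ?_
        filter_upwards [hce] with ω h1
        calc Pk ω * (μ[e|m]) ω ≤ Pk ω * (1 + a) :=
              mul_le_mul_of_nonneg_left h1 (hPk0 ω)
          _ = (1 + a) * Pk ω := by ring
    _ = (1 + a) * ∫ ω, Pk ω ∂μ := integral_const_mul _ _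

/-- Martingale-type concentration lemma (Csiszár–Narayan, Lemma A1):
if `X₁,…,X_L` are random variables, `f i` is a `[0,1]`-valued measurable function of the
first `i+1` of them (indices `0`-based), and each conditional expectation
`E[f i (X₀,…,X i) | X₀,…,X (i−1)]` is a.s. at most `a`, then
`Pr[(1/L)·Σᵢ f i (X₀,…,X i) > τ] ≤ exp(−L(τ·ln 2 − a))` for every `τ > 0`. -/
theorem stmt8 {Ω : Type*} [MeasurableSpace Ω] (μ : Measure Ω) [IsProbabilityMeasure μ]
    (L : ℕ) (X : Fin L → Ω → ℝ) (hX : ∀ i, Measurable (X i))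
    (f : (i : Fin L) → (Fin (i.val + 1) → ℝ) → ℝ)
    (hf : ∀ i, Measurable (f i))
    (hf0 : ∀ i y, 0 ≤ f i y) (hf1 : ∀ i y, f i y ≤ 1)
    (a : ℝ) (ha : 0 < a)
    (hcond : ∀ i : Fin L,
      ∀ᵐ ω ∂μ,
        (μ[(fun ω' => f i (fun j => X (j.castLE i.isLt) ω')) |
            MeasurableSpace.comap
              (fun ω' => fun j : Fin i.val => X (j.castLE i.isLt.le) ω')
              MeasurableSpace.pi]) ω ≤ a) :
    ∀ τ : ℝ, 0 < τ →
      (μ {ω | τ < (1 / L : ℝ) *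
          ∑ i : Fin L, f i (fun j => X (j.castLE i.isLt) ω)}).toReal ≤
        Real.exp (-(L * (τ * Real.log 2 - a))) := by
  intro τ hτ
  set g : Fin L → Ω → ℝ := fun i ω => f i (fun j => X (j.castLE i.isLt) ω) with hgdef
  have hgmeas : ∀ i, Measurable (g i) := fun i =>
    (hf i).comp (measurable_pi_lambda _ fun j => hX _)
  have hg0 : ∀ i ω, 0 ≤ g i ω := fun i ω => hf0 i _
  have hg1 : ∀ i ω, g i ω ≤ 1 := fun i ω => hf1 i _
  set S : ℕ → Ω → ℝ :=
    fun k ω => ∑ i ∈ Finset.univ.filter (fun i : Fin L => i.val < k), g i ω with hSdef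
  set P : ℕ → Ω → ℝ := fun k ω => Real.exp (Real.log 2 * S k ω) with hPdef
  have hSmeas : ∀ k, Measurable (S k) := fun k => Finset.measurable_sum _ fun i _ => hgmeas i
  have hPmeas : ∀ k, Measurable (P k) :=
    fun k => Real.measurable_exp.comp (measurable_const.mul (hSmeas k))
  have hP0 : ∀ k ω, 0 < P k ω := fun k ω => Real.exp_pos _
  have hPle : ∀ k ω, P k ω ≤ Real.exp (Real.log 2 * L) := by
    intro k ω
    apply Real.exp_le_exp.mpr
    apply mul_le_mul_of_nonneg_left _ (Real.log_nonneg one_le_two)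
    calc S k ω ≤ ∑ i ∈ Finset.univ.filter (fun i : Fin L => i.val < k), 1 :=
          Finset.sum_le_sum fun i _ => hg1 i ω
      _ = (Finset.univ.filter (fun i : Fin L => i.val < k)).card := by simp
      _ ≤ (L:ℝ) := by
          have h := Finset.card_le_card
            (Finset.filter_subset (fun i : Fin L => i.val < k) Finset.univ)
          rw [Finset.card_univ, Fintype.card_fin] at h
          exact_mod_cast h
  have hPint : ∀ k, Integrable (P k) μ := by
    intro k
    refine Integrable.mono' (integrable_const (Real.exp (Real.log 2 * L)))
      (hPmeas k).aestronglyMeasurable (Eventually.of_forall fun ω => ?_)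
    rw [Real.norm_eq_abs, abs_of_pos (hP0 k ω)]; exact hPle k ω
  -- the key inductive bound
  have key : ∀ k, k ≤ L → ∫ ω, P k ω ∂μ ≤ (1 + a) ^ k := by
    intro k
    induction k with
    | zero =>
      intro _
      have : P 0 = fun _ => 1 := by
        funext ω
        simp [hPdef, hSdef]
      rw [this]
      simp
    | succ k ih =>
      intro hk1
      have hk : k < L := hk1
      set i0 : Fin L := ⟨k, hk⟩ with hi0
      have hΦ : Measurable (fun ω' => fun j : Fin i0.val => X (j.castLE i0.isLt.le) ω') :=
        measurable_pi_lambda _ fun j => hX _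
      have hm := measurable_iff_comap_le.mp hΦ
      -- the factor, and facts not involving `m`
      set e : Ω → ℝ := fun ω => Real.exp (Real.log 2 * g i0 ω) with hedef
      have he_meas : Measurable e := Real.measurable_exp.comp (measurable_const.mul (hgmeas i0))
      have he0 : ∀ ω, 0 < e ω := fun ω => Real.exp_pos _
      have he2 : ∀ ω, e ω ≤ 1 + g i0 ω := fun ω => exp_log_two_mul_le (hg0 i0 ω) (hg1 i0 ω)
      have he_int : Integrable e μ := by
        refine Integrable.mono' (integrable_const 2) he_meas.aestronglyMeasurable
          (Eventually.of_forall fun ω => ?_)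
        rw [Real.norm_eq_abs, abs_of_pos (he0 ω)]
        calc e ω ≤ 1 + g i0 ω := he2 ω
          _ ≤ 2 := by linarith [hg1 i0 ω]
      have hsplit : P (k+1) = fun ω => P k ω * e ω := by
        funext ω
        have hins : Finset.univ.filter (fun i : Fin L => i.val < k+1)
            = insert i0 (Finset.univ.filter (fun i : Fin L => i.val < k)) := by
          ext i
          simp only [Finset.mem_filter, Finset.mem_univ, true_and, Finset.mem_insert,
            Fin.ext_iff, hi0]
          omega
        have hS : S (k+1) ω = g i0 ω + S k ω := by
          rw [hSdef]
          simp only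
          rw [hins, Finset.sum_insert (by simp [hi0])]
        simp only [hPdef, hedef, hS]
        rw [mul_add, Real.exp_add]
        ring
      have hPe_int : Integrable (fun ω => P k ω * e ω) μ := by
        rw [← hsplit]; exact hPint (k+1)
      -- now the m-level facts
      set m : MeasurableSpace Ω := MeasurableSpace.comap
        (fun ω' => fun j : Fin i0.val => X (j.castLE i0.isLt.le) ω') MeasurableSpace.pi
        with hmdef
      have hΦm : Measurable[m] (fun ω' => fun j : Fin i0.val => X (j.castLE i0.isLt.le) ω') :=
        measurable_iff_comap_le.mpr le_rfl
      have hgm : ∀ i : Fin L, i.val < k → Measurable[m] (g i) := by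
        intro i hik
        have heq : g i = (fun v : Fin i0.val → ℝ =>
            f i (fun j => v ⟨j.val, lt_of_lt_of_le j.isLt hik⟩)) ∘
            (fun ω' => fun j : Fin i0.val => X (j.castLE i0.isLt.le) ω') := by
          funext ω; rfl
        rw [heq]
        exact ((hf i).comp (measurable_pi_lambda _ fun j => measurable_pi_apply _)).comp hΦm
      have hPkm : StronglyMeasurable[m] (P k) := by
        apply Measurable.stronglyMeasurable
        apply Measurable.comp (measurable_exp)
        apply Measurable.const_mul
        apply Finset.measurable_sum
        intro i hi
        exact hgm i (Finset.mem_filter.mp hi).2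
      have hce : μ[e|m] ≤ᵐ[μ] fun _ => 1 + a :=
        hce_aux hm μ (hgmeas i0) (hg0 i0) (hg1 i0) (hcond i0)
      calc ∫ ω, P (k+1) ω ∂μ = ∫ ω, P k ω * e ω ∂μ := by rw [hsplit]
        _ ≤ (1 + a) * ∫ ω, P k ω ∂μ :=
            step_aux hm μ ha hPkm (hPmeas k) (fun ω => (hP0 k ω).le) (hPle k)
              (hPint k) hPe_int he_int (fun ω => (he0 ω).le) hce
        _ ≤ (1 + a) * (1 + a) ^ k :=
            mul_le_mul_of_nonneg_left (ih hk.le) (by linarith)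
        _ = (1 + a) ^ (k + 1) := by ring
  -- Markov
  rcases Nat.eq_zero_or_pos L with hL | hL
  · subst hL
    have hempty : {ω : Ω | τ < (1 / (0:ℕ) : ℝ) *
        ∑ i : Fin 0, f i (fun j => X (j.castLE i.isLt) ω)} = ∅ := by
      ext ω; simp; linarith
    rw [hempty]
    simp [Real.exp_nonneg]
  · set A : Set Ω := {ω | τ < (1 / L : ℝ) *
      ∑ i : Fin L, f i (fun j => X (j.castLE i.isLt) ω)} with hAdef
    have hLpos : (0:ℝ) < L := by exact_mod_cast hL
    have hSL : ∀ ω, (∑ i : Fin L, f i (fun j => X (j.castLE i.isLt) ω)) = S L ω := by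
      intro ω
      rw [hSdef]
      simp only
      rw [Finset.filter_true_of_mem (fun i _ => i.isLt)]
    have hA_meas : MeasurableSet A := by
      rw [hAdef]
      have hmeas : Measurable fun ω => (1 / L : ℝ) *
          ∑ i : Fin L, f i (fun j => X (j.castLE i.isLt) ω) := by
        apply Measurable.const_mul
        exact Finset.measurable_sum _ fun i _ => hgmeas i
      exact measurableSet_lt measurable_const hmeas
    have hA_lb : ∀ ω ∈ A, Real.exp (Real.log 2 * (L * τ)) ≤ P L ω := by
      intro ω hω
      rw [hAdef] at hω
      have h1 : (L:ℝ) * τ < S L ω := by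
        have h2 := hω
        simp only [Set.mem_setOf_eq, hSL ω] at h2
        rw [div_mul_eq_mul_div, one_mul, lt_div_iff₀ hLpos] at h2
        linarith [h2]
      apply Real.exp_le_exp.mpr
      exact mul_le_mul_of_nonneg_left h1.le (Real.log_nonneg one_le_two)
    have hmain : (μ A).toReal * Real.exp (Real.log 2 * (L * τ)) ≤ Real.exp (a * L) := by
      calc (μ A).toReal * Real.exp (Real.log 2 * (L * τ))
          = ∫ _ in A, Real.exp (Real.log 2 * (L * τ)) ∂μ := by
            rw [setIntegral_const]; simp [smul_eq_mul]; rfl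
        _ ≤ ∫ ω in A, P L ω ∂μ := by
            refine setIntegral_mono_on ((integrableOn_const_iff).mpr (Or.inr (measure_lt_top μ A)))
              ((hPint L).integrableOn) hA_meas hA_lb
        _ ≤ ∫ ω, P L ω ∂μ :=
            setIntegral_le_integral (hPint L) (Eventually.of_forall fun ω => (hP0 L ω).le)
        _ ≤ (1 + a) ^ L := key L le_rfl
        _ ≤ Real.exp a ^ L :=
            pow_le_pow_left₀ (by linarith) (by linarith [Real.add_one_le_exp a]) L
        _ = Real.exp (a * L) := by rw [← Real.exp_nat_mul]; ring_nf
    have hfin : (μ A).toReal ≤ Real.exp (a * L) / Real.exp (Real.log 2 * (L * τ)) :=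
      (le_div_iff₀ (Real.exp_pos _)).mpr hmain
    rw [← Real.exp_sub] at hfin
    calc (μ A).toReal ≤ Real.exp (a * L - Real.log 2 * (L * τ)) := hfin
      _ = Real.exp (-(L * (τ * Real.log 2 - a))) := by congr 1; ring
end

section
/- Let n ≥ 1, M ≥ 2, σ² ≥ 0. Let Ψ and Ψ' be i.i.d. random maps from {1,…,M} to ℝⁿ (i.e., (Ψ(1),…,Ψ(M)) and (Ψ'(1),…,Ψ'(M)) are independent and identically distributed random vectors), and let V be a vector of n i.i.d. N(0,σ²) coordinates independent of (Ψ, Ψ'). Then for every measurable decoder φ : ℝⁿ → {0,1,…,M} and all i ≠ j in {1,…,M}: Pr[ φ(Ψ(i) + Ψ'(j) + V) ≠ i ] + Pr[ φ(Ψ(j) + Ψ'(i) + V) ≠ j ] ≥ 1. -/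
open MeasureTheory ProbabilityTheory Real Filter
open scoped InnerProductSpace ENNReal NNReal

/-- Spoofing symmetry inequality: if `Ψ` and `Ψ'` are i.i.d. random maps
from messages to `ℝⁿ` (independent, with the same law) and `V` is an independent vector of
`n` i.i.d. `N(0,σ²)` coordinates, then for every measurable decoder `φ` (output `0` denoting
an error, message `i : Fin M` corresponding to output `i+1`) and all messages `i ≠ j`,
`Pr[φ(Ψ(i)+Ψ'(j)+V) ≠ i] + Pr[φ(Ψ(j)+Ψ'(i)+V) ≠ j] ≥ 1`. -/
theorem stmt15 {Ω : Type*} [MeasurableSpace Ω] (μ : Measure Ω) [IsProbabilityMeasure μ]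
    (n M : ℕ) (hn : 1 ≤ n) (hM : 2 ≤ M) (σ2 : ℝ) (hσ : 0 ≤ σ2)
    (Ψ Ψ' : Ω → Fin M → EuclideanSpace ℝ (Fin n)) (V : Ω → EuclideanSpace ℝ (Fin n))
    (hΨ : Measurable Ψ) (hΨ' : Measurable Ψ') (hV : Measurable V)
    (hindep : IndepFun Ψ Ψ' μ)
    (hident : Measure.map Ψ μ = Measure.map Ψ' μ)
    (hVlaw : Measure.map V μ = gaussianVec n σ2)
    (hVindep : IndepFun (fun ω => (Ψ ω, Ψ' ω)) V μ)
    (φ : EuclideanSpace ℝ (Fin n) → ℕ) (hφ : Measurable φ) (hφM : ∀ y, φ y ≤ M)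
    (i j : Fin M) (hij : i ≠ j) :
    1 ≤ (μ {ω | φ (Ψ ω i + Ψ' ω j + V ω) ≠ i.val + 1}).toReal +
        (μ {ω | φ (Ψ ω j + Ψ' ω i + V ω) ≠ j.val + 1}).toReal := by

  classical
  -- joint law of ((Ψ,Ψ'),V) is symmetric under swapping Ψ and Ψ'
  have hmΨΨ' : Measurable fun ω => (Ψ ω, Ψ' ω) := hΨ.prodMk hΨ'
  have hmΨ'Ψ : Measurable fun ω => (Ψ' ω, Ψ ω) := hΨ'.prodMk hΨ
  have hswap : Measure.map (fun ω => (Ψ ω, Ψ' ω)) μ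
      = Measure.map (fun ω => (Ψ' ω, Ψ ω)) μ := by
    rw [(indepFun_iff_map_prod_eq_prod_map_map hΨ.aemeasurable hΨ'.aemeasurable).1 hindep,
      (indepFun_iff_map_prod_eq_prod_map_map hΨ'.aemeasurable hΨ.aemeasurable).1 hindep.symm,
      hident]
  have hVindep' : IndepFun (fun ω => (Ψ' ω, Ψ ω)) V μ := by
    have := hVindep.comp (φ := Prod.swap) (ψ := id) measurable_swap measurable_id
    exact this
  have hjoint : Measure.map (fun ω => ((Ψ ω, Ψ' ω), V ω)) μ
      = Measure.map (fun ω => ((Ψ' ω, Ψ ω), V ω)) μ := by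
    rw [(indepFun_iff_map_prod_eq_prod_map_map hmΨΨ'.aemeasurable hV.aemeasurable).1 hVindep,
      (indepFun_iff_map_prod_eq_prod_map_map hmΨ'Ψ.aemeasurable hV.aemeasurable).1 hVindep',
      hswap]
  -- the two noisy observations have the same law ν
  set X : Ω → EuclideanSpace ℝ (Fin n) := fun ω => Ψ ω i + Ψ' ω j + V ω with hXdef
  set Y : Ω → EuclideanSpace ℝ (Fin n) := fun ω => Ψ ω j + Ψ' ω i + V ω with hYdef
  have hmX : Measurable X := (((measurable_pi_apply i).comp hΨ).add
    ((measurable_pi_apply j).comp hΨ')).add hV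
  have hmY : Measurable Y := (((measurable_pi_apply j).comp hΨ).add
    ((measurable_pi_apply i).comp hΨ')).add hV
  set g : ((Fin M → EuclideanSpace ℝ (Fin n)) × (Fin M → EuclideanSpace ℝ (Fin n)))
      × EuclideanSpace ℝ (Fin n) → EuclideanSpace ℝ (Fin n) :=
    fun p => p.1.1 i + p.1.2 j + p.2 with hgdef
  have hmg : Measurable g := (((measurable_pi_apply i).comp
    (measurable_fst.comp measurable_fst)).add ((measurable_pi_apply j).comp
    (measurable_snd.comp measurable_fst))).add measurable_snd
  have hlaw : Measure.map X μ = Measure.map Y μ := by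
    have h1 : Measure.map X μ
        = (Measure.map (fun ω => ((Ψ ω, Ψ' ω), V ω)) μ).map g := by
      rw [Measure.map_map hmg (hmΨΨ'.prodMk hV)]
      rfl
    have h2 : Measure.map Y μ
        = (Measure.map (fun ω => ((Ψ' ω, Ψ ω), V ω)) μ).map g := by
      rw [Measure.map_map hmg (hmΨ'Ψ.prodMk hV)]
      have : g ∘ (fun ω => ((Ψ' ω, Ψ ω), V ω)) = Y := by
        funext ω
        simp only [hgdef, Function.comp, hYdef]
        abel
      rw [this]
    rw [h1, h2, hjoint]
  set ν := Measure.map X μ with hν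
  have hνprob : IsProbabilityMeasure ν := Measure.isProbabilityMeasure_map hmX.aemeasurable
  -- rewrite the probabilities via ν
  have hsetA : MeasurableSet {y : EuclideanSpace ℝ (Fin n) | φ y ≠ i.val + 1} :=
    (hφ (measurableSet_singleton (i.val + 1))).compl
  have hsetB : MeasurableSet {y : EuclideanSpace ℝ (Fin n) | φ y ≠ j.val + 1} :=
    (hφ (measurableSet_singleton (j.val + 1))).compl
  have hA : μ {ω | φ (Ψ ω i + Ψ' ω j + V ω) ≠ i.val + 1}
      = ν {y | φ y ≠ i.val + 1} := by
    rw [hν, Measure.map_apply hmX hsetA]; rfl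
  have hB : μ {ω | φ (Ψ ω j + Ψ' ω i + V ω) ≠ j.val + 1}
      = ν {y | φ y ≠ j.val + 1} := by
    rw [hlaw, Measure.map_apply hmY hsetB]; rfl
  -- the key inequality in ℝ≥0∞
  have hij' : i.val + 1 ≠ j.val + 1 := fun h => hij (Fin.ext (Nat.succ_injective h))
  have hcover : (Set.univ : Set (EuclideanSpace ℝ (Fin n)))
      ⊆ {y | φ y ≠ i.val + 1} ∪ {y | φ y ≠ j.val + 1} := by
    intro y _
    by_cases h : φ y = i.val + 1
    · right; simp [h, hij', Fin.val_inj, hij]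
    · left; exact h
  have hge : (1 : ℝ≥0∞) ≤ ν {y | φ y ≠ i.val + 1} + ν {y | φ y ≠ j.val + 1} := by
    calc (1 : ℝ≥0∞) = ν Set.univ := (measure_univ).symm
      _ ≤ ν ({y | φ y ≠ i.val + 1} ∪ {y | φ y ≠ j.val + 1}) := measure_mono hcover
      _ ≤ _ := measure_union_le _ _
  have h1ne : ν {y | φ y ≠ i.val + 1} ≠ ⊤ := measure_ne_top ν _
  have h2ne : ν {y | φ y ≠ j.val + 1} ≠ ⊤ := measure_ne_top ν _
  rw [hA, hB, ← ENNReal.toReal_add h1ne h2ne]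
  have := ENNReal.toReal_mono (ENNReal.add_ne_top.2 ⟨h1ne, h2ne⟩) hge
  simpa using this
end

section
/- Let n ≥ 1, M ≥ 2, σ² ≥ 0. Let Ψ and Ψ' be i.i.d. random maps from {1,…,M} to ℝⁿ, and let V be a vector of n i.i.d. N(0,σ²) coordinates independent of (Ψ, Ψ'). For a fixed vector s ∈ ℝⁿ write e(s,i) = Pr_{Ψ,V}[ φ(Ψ(i) + s + V) ≠ i ] and e_max(s) = max_{1 ≤ i ≤ M} e(s,i), where φ : ℝⁿ → {0,1,…,M} is any measurable decoder. Then (1/M)·Σ_{j=1}^{M} E[ e_max(Ψ'(j)) ] ≥ (M−1)/(2M) ≥ 1/4. -/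
open MeasureTheory ProbabilityTheory Real Filter
open scoped InnerProductSpace ENNReal NNReal

/-- Exchanging the two `α`-coordinates of `κ ⊗ (κ ⊗ γ)` (with the middle one
tied to the `β`-coordinate) preserves the measure. -/
lemma exchange_prod {α β : Type*} [MeasurableSpace α] [MeasurableSpace β]
    (κ : Measure α) (γ : Measure β) [SigmaFinite κ] [SigmaFinite γ]
    {T : Set (α × (α × β))} (hT : MeasurableSet T) :
    (κ.prod (κ.prod γ)) ((fun p : α × (α × β) => (p.2.1, (p.1, p.2.2))) ⁻¹' T)
      = (κ.prod (κ.prod γ)) T := by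
  have m1 : MeasurePreserving (Prod.map Prod.swap (id : β → β))
      ((κ.prod κ).prod γ) ((κ.prod κ).prod γ) :=
    (Measure.measurePreserving_swap (μ := κ) (ν := κ)).prod (MeasurePreserving.id γ)
  have m2 := MeasureTheory.measurePreserving_prodAssoc κ κ γ
  have m3 := (MeasureTheory.measurePreserving_prodAssoc κ κ γ).symm
    (MeasurableEquiv.prodAssoc (α := α) (β := α) (γ := β))
  have mp := (m2.comp m1).comp m3
  have hfun : ((⇑(MeasurableEquiv.prodAssoc (α := α) (β := α) (γ := β)) ∘
      Prod.map Prod.swap (id : β → β)) ∘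
      ⇑(MeasurableEquiv.prodAssoc (α := α) (β := α) (γ := β)).symm)
      = fun p : α × (α × β) => (p.2.1, (p.1, p.2.2)) := by
    funext p; rfl
  rw [hfun] at mp
  exact mp.measure_preimage hT.nullMeasurableSet

/-- Abbreviation for the Euclidean signal space. -/
abbrev EV (n : ℕ) := EuclideanSpace ℝ (Fin n)

/-- Averaged spoofing bound: with `Ψ, Ψ'` i.i.d. random encoders and `V`
an independent vector of `n` i.i.d. `N(0,σ²)` coordinates, writing
`e(s,i) = Pr_{Ψ,V}[φ(Ψ(i)+s+V) ≠ i]` and `e_max(s) = max_i e(s,i)` (here the `max` over the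
nonempty finite type `Fin M` is expressed as `⨆ i`), the average over the spoofed message
`j` of `E[e_max(Ψ'(j))]` is at least `(M−1)/(2M)`, which is at least `1/4`. The decoder `φ`
outputs `0` for an error and `i+1` for message `i : Fin M`. -/
theorem stmt16 {Ω : Type*} [MeasurableSpace Ω] (μ : Measure Ω) [IsProbabilityMeasure μ]
    (n M : ℕ) (hn : 1 ≤ n) (hM : 2 ≤ M) (σ2 : ℝ) (hσ : 0 ≤ σ2)
    (Ψ Ψ' : Ω → Fin M → EuclideanSpace ℝ (Fin n)) (V : Ω → EuclideanSpace ℝ (Fin n))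
    (hΨ : Measurable Ψ) (hΨ' : Measurable Ψ') (hV : Measurable V)
    (hindep : IndepFun Ψ Ψ' μ)
    (hident : Measure.map Ψ μ = Measure.map Ψ' μ)
    (hVlaw : Measure.map V μ = gaussianVec n σ2)
    (hVindep : IndepFun (fun ω => (Ψ ω, Ψ' ω)) V μ)
    (φ : EuclideanSpace ℝ (Fin n) → ℕ) (hφ : Measurable φ) (hφM : ∀ y, φ y ≤ M) :
    (1 / 4 : ℝ) ≤ ((M : ℝ) - 1) / (2 * M) ∧
    ((M : ℝ) - 1) / (2 * M) ≤ (1 / M : ℝ) * ∑ j : Fin M,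
      ∫ ω, (⨆ i : Fin M,
        (μ {ω' | φ (Ψ ω' i + Ψ' ω j + V ω') ≠ i.val + 1}).toReal) ∂μ := by
  classical
  have hM2 : (2 : ℝ) ≤ (M : ℝ) := by exact_mod_cast hM
  have hM0 : (0 : ℝ) < (M : ℝ) := by linarith
  haveI : Nonempty (Fin M) := ⟨⟨0, by omega⟩⟩
  refine ⟨?_, ?_⟩
  · rw [div_le_div_iff₀ (by norm_num) (by linarith)]
    linarith
  -- Notation
  have hκP : IsProbabilityMeasure (μ.map Ψ) := Measure.isProbabilityMeasure_map hΨ.aemeasurable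
  have hγP : IsProbabilityMeasure (μ.map V) := Measure.isProbabilityMeasure_map hV.aemeasurable
  set κ : Measure (Fin M → EV n) := μ.map Ψ with hκdef
  set γ : Measure (EV n) := μ.map V with hγdef
  set ν : Measure ((Fin M → EV n) × ((Fin M → EV n) × EV n)) := κ.prod (κ.prod γ) with hνdef
  haveI : IsProbabilityMeasure ν := by rw [hνdef]; infer_instance
  -- Ψ is independent of V
  have hΨV : IndepFun Ψ V μ := hVindep.comp measurable_fst measurable_id
  have hmapΨV : μ.map (fun ω => (Ψ ω, V ω)) = κ.prod γ :=
    (indepFun_iff_map_prod_eq_prod_map_map hΨ.aemeasurable hV.aemeasurable).mp hΨV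
  -- The error sets on the canonical triple space
  set S : Fin M → Fin M → Set ((Fin M → EV n) × ((Fin M → EV n) × EV n)) :=
    fun i j => {p | φ (p.2.1 i + p.1 j + p.2.2) ≠ i.val + 1} with hSdef
  have hSm : ∀ i j, MeasurableSet (S i j) := by
    intro i j
    have m1 : Measurable fun p : (Fin M → EV n) × ((Fin M → EV n) × EV n) =>
        p.2.1 i + p.1 j + p.2.2 :=
      (((measurable_pi_apply i).comp (measurable_fst.comp measurable_snd)).add
        ((measurable_pi_apply j).comp measurable_fst)).add
        (measurable_snd.comp measurable_snd)
    exact ((hφ.comp m1) (measurableSet_singleton (i.val + 1))).compl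
  -- the error probability as a function of the spoof signal s
  set g : Fin M → EV n → ℝ :=
    fun i s => (μ {ω' | φ (Ψ ω' i + s + V ω') ≠ i.val + 1}).toReal with hgdef
  have hcset : ∀ (i : Fin M) (s : EV n),
      MeasurableSet {c : (Fin M → EV n) × EV n | φ (c.1 i + s + c.2) ≠ i.val + 1} := by
    intro i s
    have m1 : Measurable fun c : (Fin M → EV n) × EV n => c.1 i + s + c.2 :=
      (((measurable_pi_apply i).comp measurable_fst).add measurable_const).add
        measurable_snd
    exact ((hφ.comp m1) (measurableSet_singleton (i.val + 1))).compl
  have hgrep : ∀ (i : Fin M) (s : EV n), g i s =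
      ((κ.prod γ) {c : (Fin M → EV n) × EV n | φ (c.1 i + s + c.2) ≠ i.val + 1}).toReal := by
    intro i s
    have h1 : μ {ω' | φ (Ψ ω' i + s + V ω') ≠ i.val + 1}
        = (μ.map (fun ω => (Ψ ω, V ω))) {c | φ (c.1 i + s + c.2) ≠ i.val + 1} := by
      rw [Measure.map_apply (hΨ.prodMk hV) (hcset i s)]
      rfl
    simp only [hgdef, h1, hmapΨV]
  have hgm : ∀ i, Measurable (g i) := by
    intro i
    have hW : MeasurableSet {q : EV n × ((Fin M → EV n) × EV n) |
        φ (q.2.1 i + q.1 + q.2.2) ≠ i.val + 1} := by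
      have e1 : Measurable fun q : EV n × ((Fin M → EV n) × EV n) => q.2.1 i :=
        (measurable_pi_apply i).comp (measurable_fst.comp measurable_snd)
      have e2 : Measurable fun q : EV n × ((Fin M → EV n) × EV n) => q.1 :=
        measurable_fst
      have e3 : Measurable fun q : EV n × ((Fin M → EV n) × EV n) => q.2.2 :=
        measurable_snd.comp measurable_snd
      have m1 : Measurable fun q : EV n × ((Fin M → EV n) × EV n) =>
          q.2.1 i + q.1 + q.2.2 := (e1.add e2).add e3
      exact ((hφ.comp m1) (measurableSet_singleton (i.val + 1))).compl
    have heq : g i = fun s =>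
        ((κ.prod γ) (Prod.mk s ⁻¹' {q : EV n × ((Fin M → EV n) × EV n) |
          φ (q.2.1 i + q.1 + q.2.2) ≠ i.val + 1})).toReal := by
      funext s; rw [hgrep i s]; rfl
    rw [heq]
    exact (measurable_measure_prodMk_left hW).ennreal_toReal
  have hg0 : ∀ (i : Fin M) (s : EV n), 0 ≤ g i s := fun i s => ENNReal.toReal_nonneg
  have hg1 : ∀ (i : Fin M) (s : EV n), g i s ≤ 1 := by
    intro i s
    have h := prob_le_one (μ := μ) (s := {ω' | φ (Ψ ω' i + s + V ω') ≠ i.val + 1})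
    have := ENNReal.toReal_mono ENNReal.one_ne_top h
    simpa [hgdef] using this
  -- integrability helper
  have hint : ∀ f : Ω → ℝ, Measurable f → (∀ ω, 0 ≤ f ω) → (∀ ω, f ω ≤ 1) →
      Integrable f μ := by
    intro f hf h0 h1
    refine (integrable_const (1 : ℝ)).mono' hf.aestronglyMeasurable
      (ae_of_all _ fun ω => ?_)
    rw [Real.norm_eq_abs, abs_of_nonneg (h0 ω)]
    exact h1 ω
  have hΨ'j : ∀ j : Fin M, Measurable fun ω => Ψ' ω j :=
    fun j => (measurable_pi_apply j).comp hΨ'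
  have hcomp : ∀ i j : Fin M, Measurable fun ω => g i (Ψ' ω j) :=
    fun i j => (hgm i).comp (hΨ'j j)
  have hsupm : ∀ j : Fin M, Measurable fun ω => ⨆ i, g i (Ψ' ω j) :=
    fun j => Measurable.iSup fun i => hcomp i j
  -- The average of g i over the law of the spoof
  have hA : ∀ i j : Fin M, ∫ ω, g i (Ψ' ω j) ∂μ = (ν (S i j)).toReal := by
    intro i j
    have h1 : ∫ ω, g i (Ψ' ω j) ∂μ = ∫ b, g i (b j) ∂κ := by
      rw [hident,
        integral_map (φ := Ψ') (f := fun b => g i (b j)) hΨ'.aemeasurable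
          (((hgm i).comp (measurable_pi_apply j)).aestronglyMeasurable)]
    have h2 : ∀ b : Fin M → EV n, g i (b j)
        = ((κ.prod γ) (Prod.mk b ⁻¹' S i j)).toReal := by
      intro b; rw [hgrep i (b j)]; rfl
    rw [h1]
    simp only [h2]
    rw [integral_toReal (measurable_measure_prodMk_left (hSm i j)).aemeasurable
      (ae_of_all _ fun b => measure_lt_top _ _), hνdef,
      Measure.prod_apply (hSm i j)]
  -- exchangeability
  have hexch : ∀ i j : Fin M,
      ν (S j i) = ν {p | φ (p.2.1 i + p.1 j + p.2.2) ≠ j.val + 1} := by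
    intro i j
    have key : ν ((fun p : (Fin M → EV n) × ((Fin M → EV n) × EV n) =>
        (p.2.1, (p.1, p.2.2))) ⁻¹' S j i) = ν (S j i) := by
      rw [hνdef]; exact exchange_prod κ γ (hSm j i)
    rw [← key]
    congr 1
    ext p
    simp only [hSdef, Set.mem_preimage, Set.mem_setOf_eq]
    rw [add_comm (p.1 j) (p.2.1 i)]
  -- core pairwise bound
  have hcore : ∀ i j : Fin M, i ≠ j →
      1 ≤ (ν (S i j)).toReal + (ν (S j i)).toReal := by
    intro i j hij
    set T : Set ((Fin M → EV n) × ((Fin M → EV n) × EV n)) :=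
      {p | φ (p.2.1 i + p.1 j + p.2.2) ≠ j.val + 1} with hTdef
    have hvij : i.val ≠ j.val := fun h => hij (Fin.ext h)
    have hunion : Set.univ ⊆ S i j ∪ T := by
      intro p _
      by_cases h : φ (p.2.1 i + p.1 j + p.2.2) = i.val + 1
      · right
        show φ (p.2.1 i + p.1 j + p.2.2) ≠ j.val + 1
        rw [h]; omega
      · left; exact h
    have h1 : (1 : ℝ≥0∞) ≤ ν (S i j) + ν T := by
      calc (1 : ℝ≥0∞) = ν Set.univ := measure_univ.symm
        _ ≤ ν (S i j ∪ T) := measure_mono hunion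
        _ ≤ ν (S i j) + ν T := measure_union_le _ _
    rw [hexch i j, ← hTdef]
    have hne1 : ν (S i j) ≠ ⊤ := measure_ne_top _ _
    have hne2 : ν T ≠ ⊤ := measure_ne_top _ _
    have h2 := ENNReal.toReal_mono (ENNReal.add_ne_top.mpr ⟨hne1, hne2⟩) h1
    rw [ENNReal.toReal_add hne1 hne2] at h2
    simpa using h2
  -- the integral of the sup
  set B : Fin M → ℝ := fun j => ∫ ω, ⨆ i, g i (Ψ' ω j) ∂μ with hBdef
  have hintsup : ∀ j, Integrable (fun ω => ⨆ i, g i (Ψ' ω j)) μ := fun j =>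
    hint _ (hsupm j) (fun ω => Real.iSup_nonneg fun i => hg0 i _)
      (fun ω => ciSup_le fun i => hg1 i _)
  have hBge : ∀ i j : Fin M, (ν (S i j)).toReal ≤ B j := by
    intro i j
    rw [← hA i j, hBdef]
    refine integral_mono (hint _ (hcomp i j) (fun ω => hg0 _ _) (fun ω => hg1 _ _))
      (hintsup j) fun ω => ?_
    exact le_ciSup (f := fun i : Fin M => g i (Ψ' ω j)) (Set.Finite.bddAbove (Set.finite_range _)) i
  have hpair : ∀ i j : Fin M, i ≠ j → (1 : ℝ) ≤ B i + B j := by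
    intro i j hij
    have := hcore i j hij
    have h1 := hBge i j
    have h2 := hBge j i
    linarith
  -- combinatorics
  have hcard : ∀ i : Fin M, (Finset.univ.erase i).card = M - 1 := fun i => by
    rw [Finset.card_erase_of_mem (Finset.mem_univ i), Finset.card_univ, Fintype.card_fin]
  have hMcast : ((M - 1 : ℕ) : ℝ) = (M : ℝ) - 1 := by
    rw [Nat.cast_sub (by omega)]; norm_num
  have h1 : (M : ℝ) * ((M : ℝ) - 1)
      ≤ ∑ i : Fin M, ∑ j ∈ Finset.univ.erase i, (B i + B j) := by
    have : (M : ℝ) * ((M : ℝ) - 1)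
        = ∑ i : Fin M, ∑ _j ∈ Finset.univ.erase i, (1 : ℝ) := by
      simp only [Finset.sum_const, hcard, nsmul_eq_mul, mul_one, Finset.sum_const,
        Finset.card_univ, Fintype.card_fin, hMcast]
      try ring
    rw [this]
    refine Finset.sum_le_sum fun i _ => Finset.sum_le_sum fun j hj => ?_
    exact hpair i j (Ne.symm (Finset.ne_of_mem_erase hj))
  have h2 : ∑ i : Fin M, ∑ j ∈ Finset.univ.erase i, (B i + B j)
      = 2 * ((M : ℝ) - 1) * ∑ j, B j := by
    have hrow : ∀ i : Fin M, ∑ j ∈ Finset.univ.erase i, (B i + B j)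
        = ((M : ℝ) - 1) * B i + ((∑ j, B j) - B i) := by
      intro i
      rw [Finset.sum_add_distrib, Finset.sum_const, hcard i,
        Finset.sum_erase_eq_sub (Finset.mem_univ i), nsmul_eq_mul, hMcast]
    simp only [hrow]
    rw [Finset.sum_add_distrib, ← Finset.mul_sum, Finset.sum_sub_distrib,
      Finset.sum_const, Finset.card_univ, Fintype.card_fin, nsmul_eq_mul]
    ring
  have hsum : (M : ℝ) / 2 ≤ ∑ j, B j := by
    rw [h2] at h1
    nlinarith [h1, hM2]
  -- conclude
  have hfinal : ((M : ℝ) - 1) / (2 * M) ≤ (1 / M : ℝ) * ∑ j, B j := by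
    have hhalf : ((M : ℝ) - 1) / (2 * M) ≤ 1 / 2 := by
      rw [div_le_div_iff₀ (by linarith) (by norm_num)]
      linarith
    refine hhalf.trans ?_
    have hmul : (1 / M : ℝ) * ((M : ℝ) / 2) ≤ (1 / M : ℝ) * ∑ j, B j :=
      mul_le_mul_of_nonneg_left hsum (by positivity)
    have heq : (1 / M : ℝ) * ((M : ℝ) / 2) = 1 / 2 := by field_simp
    linarith
  exact hfinal
end
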